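/- For smooth f, g : ℝ^{1+3} → ℝ on the region t > r, the null form admits the decomposition Q₀(f,g) = −(s/t)²(∂ₜf)(∂ₜg) + Σₐ (t^{-1}Lₐf)(t^{-1}Lₐg) − (xₐ/t)(∂ₜf)(t^{-1}Lₐg) − (xₐ/t)(∂ₜg)(t^{-1}Lₐf), where s² = t² − r², Lₐ = xₐ∂ₜ + t∂ₐ, and summation over a = 1,2,3 is understood. -/
import Mathlib


noncomputable def pt (f : ℝ → (Fin 3 → ℝ) → ℝ) : ℝ → (Fin 3 → ℝ) → ℝ :=
  fun t x => deriv (fun s => f s x) t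

noncomputable def px (a : Fin 3) (f : ℝ → (Fin 3 → ℝ) → ℝ) : ℝ → (Fin 3 → ℝ) → ℝ :=
  fun t x => deriv (fun s => f t (Function.update x a s)) (x a)

/-- Null form Q₀(f,g) = −∂ₜf ∂ₜg + ∇f·∇g. -/
noncomputable def Q0 (f g : ℝ → (Fin 3 → ℝ) → ℝ) : ℝ → (Fin 3 → ℝ) → ℝ :=
  fun t x => - pt f t x * pt g t x + ∑ a : Fin 3, px a f t x * px a g t x

/-- Hyperbolic rotation Lₐ = xₐ∂ₜ + t∂ₐ. -/
noncomputable def Lop (a : Fin 3) (f : ℝ → (Fin 3 → ℝ) → ℝ) : ℝ → (Fin 3 → ℝ) → ℝ :=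
  fun t x => x a * pt f t x + t * px a f t x

/-- Decomposition of the null form inside the light cone t > r, with s² = t² − r²:
Q₀(f,g) = −(s/t)²∂ₜf∂ₜg + Σₐ(t⁻¹Lₐf)(t⁻¹Lₐg) − Σₐ(xₐ/t)∂ₜf(t⁻¹Lₐg) − Σₐ(xₐ/t)∂ₜg(t⁻¹Lₐf). -/
theorem stmt4 (f g : ℝ → (Fin 3 → ℝ) → ℝ) (t : ℝ) (x : Fin 3 → ℝ)
    (ht : Real.sqrt (∑ a : Fin 3, x a ^ 2) < t) :
    Q0 f g t x =
      - ((t ^ 2 - ∑ a : Fin 3, x a ^ 2) / t ^ 2) * (pt f t x * pt g t x)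
      + ∑ a : Fin 3, (t⁻¹ * Lop a f t x) * (t⁻¹ * Lop a g t x)
      - ∑ a : Fin 3, (x a / t) * pt f t x * (t⁻¹ * Lop a g t x)
      - ∑ a : Fin 3, (x a / t) * pt g t x * (t⁻¹ * Lop a f t x) := by
  have ht0 : t ≠ 0 := ne_of_gt (lt_of_le_of_lt (Real.sqrt_nonneg _) ht)
  simp only [Q0, Lop, Fin.sum_univ_three]
  field_simp
  ring
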